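/- The generalized Cantor ladder C is continuous, nondecreasing on [0,1], and satisfies C(0)=0 and C(1)=1. -/

import Mathlib

open Set Finset

/-- Abstract nested-interval argument: if we can always refine a "good state"
(an affine copy of `C` on a subinterval whose value-window contains `y`,
with geometrically shrinking window), then `y` is attained by `C` on `[0,1]`. -/
theorem cantor_surj_aux (C : ℝ → ℝ) (y r : ℝ) (hr0 : 0 ≤ r) (hr1 : r < 1)
    (hC01 : ∀ t ∈ Set.Icc (0:ℝ) 1, 0 ≤ C t ∧ C t ≤ 1)
    (Good : ℝ × ℝ × ℝ × ℝ → Prop)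
    (hGood : ∀ s, Good s → s.1 < s.2.1 ∧ 0 ≤ s.1 ∧ s.2.1 ≤ 1 ∧ 0 < s.2.2.2 ∧
      s.2.2.1 ≤ y ∧ y ≤ s.2.2.1 + s.2.2.2 ∧
      ∀ x ∈ Set.Icc (0:ℝ) 1, C (s.1 + x * (s.2.1 - s.1)) = s.2.2.1 + s.2.2.2 * C x)
    (h0 : Good (0, 1, 0, 1))
    (hstep : ∀ s, Good s → ∃ s', Good s' ∧
      s.1 ≤ s'.1 ∧ s'.2.1 ≤ s.2.1 ∧ s'.2.2.2 ≤ r * s.2.2.2) :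
    ∃ t ∈ Set.Icc (0:ℝ) 1, C t = y := by
  choose F hF1 hF2 hF3 hF4 using hstep
  let seq : ℕ → {s : ℝ × ℝ × ℝ × ℝ // Good s} := fun n =>
    Nat.rec ⟨(0, 1, 0, 1), h0⟩ (fun _ p => ⟨F p.1 p.2, hF1 p.1 p.2⟩) n
  set lo : ℕ → ℝ := fun n => (seq n).1.1 with hlo
  set hi : ℕ → ℝ := fun n => (seq n).1.2.1 with hhi
  set q : ℕ → ℝ := fun n => (seq n).1.2.2.2 with hq
  have hg : ∀ n, Good (seq n).1 := fun n => (seq n).2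
  have hlomono : Monotone lo := by
    apply monotone_nat_of_le_succ
    intro n
    exact hF2 (seq n).1 (seq n).2
  have hhianti : Antitone hi := by
    apply antitone_nat_of_succ_le
    intro n
    exact hF3 (seq n).1 (seq n).2
  have hlohi : ∀ n, lo n < hi n := fun n => (hGood _ (hg n)).1
  have hlohi' : ∀ n k, lo n ≤ hi k := by
    intro n k
    rcases le_total n k with h | h
    · exact (hlomono h).trans (hlohi k).le
    · exact (hlohi n).le.trans (hhianti h)
  have hqr : ∀ n, q n ≤ r ^ n := by
    intro n
    induction n with
    | zero => simp [q, seq]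
    | succ n ih =>
      have h1 : q (n+1) ≤ r * q n := hF4 (seq n).1 (seq n).2
      calc q (n+1) ≤ r * q n := h1
        _ ≤ r * r ^ n := by nlinarith [pow_nonneg hr0 n]
        _ = r ^ (n+1) := by ring
  have hbdd : BddAbove (Set.range lo) := ⟨hi 0, by rintro x ⟨n, rfl⟩; exact hlohi' n 0⟩
  set t := ⨆ n, lo n with ht
  have htmem : ∀ n, lo n ≤ t ∧ t ≤ hi n := by
    intro n
    constructor
    · exact le_ciSup hbdd n
    · exact ciSup_le fun k => hlohi' k n
  have ht01 : t ∈ Set.Icc (0:ℝ) 1 := by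
    constructor
    · have := (htmem 0).1
      have hlo0 : lo 0 = 0 := rfl
      linarith
    · have := (htmem 0).2
      have hhi0 : hi 0 = 1 := rfl
      linarith
  refine ⟨t, ht01, ?_⟩
  have key : ∀ n, |C t - y| ≤ r ^ n := by
    intro n
    obtain ⟨h1, h2, h3, h4, h5, h6, h7⟩ := hGood _ (hg n)
    set x := (t - lo n) / (hi n - lo n) with hx
    have hd : (0:ℝ) < hi n - lo n := by linarith [hlohi n]
    have hx01 : x ∈ Set.Icc (0:ℝ) 1 := by
      constructor
      · apply div_nonneg _ hd.le
        linarith [(htmem n).1]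
      · rw [div_le_one hd]
        linarith [(htmem n).2]
    have harg : lo n + x * (hi n - lo n) = t := by
      rw [hx, div_mul_cancel₀ _ hd.ne']; ring
    have hval := h7 x hx01
    rw [harg] at hval
    have hCx := hC01 x hx01
    have : |C t - y| ≤ q n := by
      rw [abs_le]
      constructor
      · rw [hval]; nlinarith
      · rw [hval]; nlinarith
    exact this.trans (hqr n)
  have hlim : Filter.Tendsto (fun n => r ^ n) Filter.atTop (nhds 0) :=
    tendsto_pow_atTop_nhds_zero_of_lt_one hr0 hr1
  have h1 : |C t - y| ≤ 0 := ge_of_tendsto' hlim key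
  have h2 := abs_nonneg (C t - y)
  have h3 : |C t - y| = 0 := le_antisymm h1 h2
  have := abs_eq_zero.mp h3
  linarith

set_option maxHeartbeats 2000000 in
/-- The generalized Cantor ladder `C` (the unique bounded solution of the
self-similarity relations) is continuous, nondecreasing on `[0,1]`, and
satisfies `C 0 = 0`, `C 1 = 1`. Steps are indexed by `k = 0, …, m-1`. -/
theorem cantorLadder_continuous_monotone
    (m : ℕ) (a b ρ : ℕ → ℝ) (C : ℝ → ℝ)
    (hm : 2 ≤ m)
    (ha0 : a 0 = 0) (hbm : b (m - 1) = 1)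
    (hab : ∀ k < m, a k < b k)
    (horder : ∀ k, k + 1 < m → b k ≤ a (k + 1))
    (hρpos : ∀ k < m, 0 < ρ k)
    (hρsum : ∑ k ∈ Finset.range m, ρ k = 1)
    -- `C` is bounded on `[0,1]`
    (hbd : ∃ M : ℝ, ∀ t ∈ Set.Icc (0:ℝ) 1, |C t| ≤ M)
    -- self-similarity on the steps: `C t = h_{k-1} + ρ_k C((t-a_k)/(b_k-a_k))`
    (hstep : ∀ k < m, ∀ t ∈ Set.Icc (a k) (b k),
      C t = (∑ j ∈ Finset.range k, ρ j) + ρ k * C ((t - a k) / (b k - a k)))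
    -- `C` is constant `h_k` on the gaps
    (hgap : ∀ k, k + 1 < m → ∀ t ∈ Set.Icc (b k) (a (k + 1)),
      C t = ∑ j ∈ Finset.range (k + 1), ρ j) :
    ContinuousOn C (Set.Icc 0 1) ∧ MonotoneOn C (Set.Icc 0 1) ∧ C 0 = 0 ∧ C 1 = 1 := by
  -- partial sums
  set H : ℕ → ℝ := fun k => ∑ j ∈ Finset.range k, ρ j with hH
  have hHsucc : ∀ k, H (k + 1) = H k + ρ k := fun k => Finset.sum_range_succ ρ k
  have hH0 : H 0 = 0 := rfl
  have hHm : H m = 1 := hρsum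
  have hHmono : ∀ {k l}, k ≤ l → l ≤ m → H k ≤ H l := by
    intro k l hkl hlm
    apply Finset.sum_le_sum_of_subset_of_nonneg (Finset.range_subset_range.2 hkl)
    intro j hj _
    exact (hρpos j (lt_of_lt_of_le (Finset.mem_range.1 hj) hlm)).le
  have hHnonneg : ∀ k, k ≤ m → 0 ≤ H k := fun k hk => hH0 ▸ hHmono (Nat.zero_le k) hk
  have hHle1 : ∀ k, k ≤ m → H k ≤ 1 := fun k hk => hHm ▸ hHmono hk le_rfl
  -- ordering chain
  have hba : ∀ k l, k < l → l < m → b k ≤ a l := by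
    intro k l hkl hlm
    induction l with
    | zero => omega
    | succ n ih =>
      rcases Nat.lt_succ_iff_lt_or_eq.1 hkl with h | h
      · have h1 : b k ≤ a n := ih h (by omega)
        have h2 : a n < b n := hab n (by omega)
        have h3 : b n ≤ a (n+1) := horder n hlm
        linarith
      · subst h; exact horder k hlm
  have hamono : ∀ k l, k ≤ l → l < m → a k ≤ a l := by
    intro k l hkl hlm
    rcases eq_or_lt_of_le hkl with h | h
    · subst h; rfl
    · exact le_trans (hab k (lt_trans h hlm)).le (hba k l h hlm)
  have hbmono : ∀ k l, k ≤ l → l < m → b k ≤ b l := by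
    intro k l hkl hlm
    rcases eq_or_lt_of_le hkl with h | h
    · subst h; rfl
    · exact le_trans (hba k l h hlm) (hab l hlm).le
  have hanonneg : ∀ k, k < m → 0 ≤ a k := by
    intro k hk
    have := hamono 0 k (Nat.zero_le k) hk
    linarith [ha0 ▸ this]
  have hble1 : ∀ k, k < m → b k ≤ 1 := by
    intro k hk
    have h1 : k ≤ m - 1 := by omega
    have := hbmono k (m-1) h1 (by omega)
    linarith [hbm ▸ this]
  -- cover
  have cover : ∀ t ∈ Set.Icc (0:ℝ) 1, ∃ k < m,
      (a k ≤ t ∧ t ≤ b k) ∨ (k + 1 < m ∧ b k ≤ t ∧ t ≤ a (k + 1)) := by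
    intro t ht
    classical
    set k := Nat.findGreatest (fun j => a j ≤ t) (m - 1) with hk
    have hP0 : a 0 ≤ t := by rw [ha0]; exact ht.1
    have hPk : a k ≤ t := by
      have := Nat.findGreatest_spec (P := fun j => a j ≤ t) (Nat.zero_le (m-1)) hP0
      simpa [hk] using this
    have hkle : k ≤ m - 1 := Nat.findGreatest_le _
    have hkm : k < m := by omega
    refine ⟨k, hkm, ?_⟩
    rcases le_or_gt t (b k) with h | h
    · exact Or.inl ⟨hPk, h⟩
    · have hkne : k ≠ m - 1 := by
        intro he
        rw [he, hbm] at h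
        linarith [ht.2]
      have hk1m : k + 1 < m := by omega
      have hnot : ¬ a (k + 1) ≤ t := Nat.findGreatest_is_greatest (Nat.lt_succ_self k) (by omega)
      exact Or.inr ⟨hk1m, h.le, (not_le.1 hnot).le⟩
  -- contraction ratio
  obtain ⟨r, hr0, hr1, hrρ⟩ : ∃ r : ℝ, 0 ≤ r ∧ r < 1 ∧ ∀ k < m, ρ k ≤ r := by
    have hne : (Finset.range m).Nonempty := ⟨0, Finset.mem_range.2 (by omega)⟩
    set r := (Finset.range m).sup' hne ρ with hr
    have hle : ∀ k < m, ρ k ≤ r := fun k hk => Finset.le_sup' ρ (Finset.mem_range.2 hk)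
    have hρlt1 : ∀ k < m, ρ k < 1 := by
      intro k hk
      set l := if k = 0 then 1 else 0 with hl
      have hlm : l < m := by
        rcases Nat.eq_zero_or_pos k with h | h <;> simp [hl, h, Nat.pos_iff_ne_zero.1] <;> omega
      have hlk : l ≠ k := by
        rcases Nat.eq_zero_or_pos k with h | h <;> simp [hl, h, Nat.pos_iff_ne_zero.1] <;> omega
      have hsub : ({k, l} : Finset ℕ) ⊆ Finset.range m := by
        intro j hj
        simp only [Finset.mem_insert, Finset.mem_singleton] at hj
        rcases hj with h | h <;> subst h <;> exact Finset.mem_range.2 (by assumption)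
      have hsum2 : ρ k + ρ l ≤ ∑ j ∈ Finset.range m, ρ j := by
        have := Finset.sum_le_sum_of_subset_of_nonneg hsub
          (fun j hj _ => (hρpos j (Finset.mem_range.1 hj)).le)
        rwa [Finset.sum_pair (Ne.symm hlk)] at this
      have := hρpos l hlm
      linarith [hρsum ▸ hsum2]
    obtain ⟨k0, hk0, hk0eq⟩ := Finset.exists_mem_eq_sup' hne ρ
    refine ⟨r, ?_, ?_, hle⟩
    · exact le_trans (hρpos 0 (by omega)).le (hle 0 (by omega))
    · rw [hr, hk0eq]; exact hρlt1 k0 (Finset.mem_range.1 hk0)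
  -- scaled point lemma
  have scaled : ∀ k, k < m → ∀ t, a k ≤ t → t ≤ b k →
      (t - a k) / (b k - a k) ∈ Set.Icc (0:ℝ) 1 := by
    intro k hk t h1 h2
    have hd : (0:ℝ) < b k - a k := by linarith [hab k hk]
    constructor
    · apply div_nonneg _ hd.le; linarith
    · rw [div_le_one hd]; linarith
  -- bounds 0 ≤ C ≤ 1 on [0,1]
  have bound01 : ∀ t ∈ Set.Icc (0:ℝ) 1, 0 ≤ C t ∧ C t ≤ 1 := by
    obtain ⟨M, hM⟩ := hbd
    have hM0 : 0 ≤ M := le_trans (abs_nonneg _) (hM 0 (by norm_num))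
    have key : ∀ n, ∀ t ∈ Set.Icc (0:ℝ) 1, -(M * r ^ n) ≤ C t ∧ C t ≤ 1 + M * r ^ n := by
      intro n
      induction n with
      | zero =>
        intro t ht
        have := abs_le.1 (hM t ht)
        constructor <;> simp <;> linarith [this.1, this.2]
      | succ n ih =>
        intro t ht
        obtain ⟨k, hk, hcase⟩ := cover t ht
        have hrn : (0:ℝ) ≤ r ^ n := pow_nonneg hr0 n
        rcases hcase with ⟨h1, h2⟩ | ⟨hk1, h1, h2⟩
        · have hu := scaled k hk t h1 h2
          obtain ⟨ih1, ih2⟩ := ih _ hu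
          rw [hstep k hk t ⟨h1, h2⟩]
          have hρk := hρpos k hk
          have hρr := hrρ k hk
          have hHk0 := hHnonneg k (le_of_lt hk)
          have hHk1 := hHle1 (k+1) hk
          rw [hHsucc] at hHk1
          have hpow : r ^ (n+1) = r * r ^ n := by ring
          have p1 : ρ k * (M * r ^ n) ≤ r * (M * r ^ n) :=
            mul_le_mul_of_nonneg_right hρr (mul_nonneg hM0 hrn)
          have p2 : ρ k * (-(M * r ^ n)) ≤ ρ k * C ((t - a k) / (b k - a k)) :=
            mul_le_mul_of_nonneg_left ih1 hρk.le
          have p3 : ρ k * C ((t - a k) / (b k - a k)) ≤ ρ k * (1 + M * r ^ n) :=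
            mul_le_mul_of_nonneg_left ih2 hρk.le
          constructor
          · rw [hpow]; nlinarith
          · rw [hpow]; nlinarith
        · rw [hgap k hk1 t ⟨h1, h2⟩]
          have h3 := hHnonneg (k+1) (by omega)
          have h4 := hHle1 (k+1) (by omega)
          have : 0 ≤ M * r ^ (n+1) := by positivity
          constructor <;> linarith
    intro t ht
    have hpow : Filter.Tendsto (fun n => r ^ n) Filter.atTop (nhds 0) :=
      tendsto_pow_atTop_nhds_zero_of_lt_one hr0 hr1
    constructor
    · have h1 : Filter.Tendsto (fun n => -(M * r ^ n)) Filter.atTop (nhds 0) := by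
        have := (hpow.const_mul M).neg
        simpa using this
      exact le_of_tendsto' h1 (fun n => (key n t ht).1)
    · have h2 : Filter.Tendsto (fun n => 1 + M * r ^ n) Filter.atTop (nhds 1) := by
        have := (hpow.const_mul M).const_add 1
        simpa using this
      exact ge_of_tendsto' h2 (fun n => (key n t ht).2)
  -- refined bounds on each step interval
  have stepBounds : ∀ k, k < m → ∀ t, a k ≤ t → t ≤ b k → H k ≤ C t ∧ C t ≤ H (k+1) := by
    intro k hk t h1 h2
    have hu := scaled k hk t h1 h2
    have hCu := bound01 _ hu
    have := hstep k hk t ⟨h1, h2⟩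
    rw [this]
    have hρ := (hρpos k hk).le
    have hk1 : k + 1 ≤ m := hk
    constructor
    · nlinarith
    · rw [hHsucc]; nlinarith
  -- endpoint values
  have hC0 : C 0 = 0 := by
    have h0m : 0 < m := by omega
    have hb0 : 0 < b 0 := by have := hab 0 h0m; linarith [ha0 ▸ this]
    have h := hstep 0 h0m 0 ⟨le_of_eq ha0, hb0.le⟩
    rw [ha0] at h
    norm_num at h
    have hρr := hrρ 0 h0m
    have h2 : (1 - ρ 0) * C 0 = 0 := by linear_combination h
    rcases mul_eq_zero.1 h2 with h3 | h3
    · linarith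
    · exact h3
  have hC1 : C 1 = 1 := by
    have hm1 : m - 1 < m := by omega
    have ham1 : a (m-1) < 1 := by have := hab (m-1) hm1; linarith [hbm ▸ this]
    have h := hstep (m-1) hm1 1 ⟨ham1.le, hbm.ge⟩
    rw [hbm] at h
    rw [div_self (by linarith : (1:ℝ) - a (m-1) ≠ 0)] at h
    have hHeq : H (m-1) + ρ (m-1) = 1 := by
      have := hHsucc (m-1)
      rw [show m - 1 + 1 = m by omega] at this
      linarith [hHm ▸ this]
    have hρr := hrρ (m-1) hm1
    have h2 : (1 - ρ (m-1)) * C 1 = (1 - ρ (m-1)) * 1 := by linear_combination h + hHeq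
    have h3 : (1 - ρ (m-1)) ≠ 0 := by
      intro hc
      linarith
    have := mul_left_cancel₀ h3 h2
    linarith
  -- monotonicity
  have mono : MonotoneOn C (Set.Icc 0 1) := by
    have key : ∀ n, ∀ t ∈ Set.Icc (0:ℝ) 1, ∀ s ∈ Set.Icc (0:ℝ) 1, t ≤ s →
        C t ≤ C s + r ^ n := by
      intro n
      induction n with
      | zero =>
        intro t ht s hs _
        have := (bound01 t ht).2
        have := (bound01 s hs).1
        simp only [pow_zero]
        linarith
      | succ n ih =>
        intro t ht s hs hts
        have hrn1 : (0:ℝ) ≤ r ^ (n+1) := pow_nonneg hr0 _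
        obtain ⟨i, him, hci⟩ := cover t ht
        obtain ⟨j, hjm, hcj⟩ := cover s hs
        rcases hci with ⟨ht1, ht2⟩ | ⟨hi1m, ht1, ht2⟩
        · rcases hcj with ⟨hs1, hs2⟩ | ⟨hj1m, hs1, hs2⟩
          · -- both in step intervals
            rcases lt_trichotomy i j with hij | hij | hij
            · have e1 := (stepBounds i him t ht1 ht2).2
              have e2 := (stepBounds j hjm s hs1 hs2).1
              have e3 : H (i+1) ≤ H j := hHmono (by omega) (by omega)
              linarith
            · subst hij
              have hd : (0:ℝ) < b i - a i := by linarith [hab i him]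
              have hu := scaled i him t ht1 ht2
              have hv := scaled i him s hs1 hs2
              have huv : (t - a i) / (b i - a i) ≤ (s - a i) / (b i - a i) := by
                gcongr
              have ihuv := ih _ hu _ hv huv
              rw [hstep i him t ⟨ht1, ht2⟩, hstep i him s ⟨hs1, hs2⟩]
              have hρi := hρpos i him
              have hρr := hrρ i him
              have hrn : (0:ℝ) ≤ r ^ n := pow_nonneg hr0 n
              have p1 : ρ i * C ((t - a i) / (b i - a i)) ≤
                  ρ i * (C ((s - a i) / (b i - a i)) + r ^ n) :=
                mul_le_mul_of_nonneg_left ihuv hρi.le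
              have p2 : ρ i * r ^ n ≤ r * r ^ n := mul_le_mul_of_nonneg_right hρr hrn
              have hpow : r ^ (n+1) = r * r ^ n := by ring
              rw [hpow]
              nlinarith
            · have : t = s := by
                have := hba j i hij him
                linarith
              subst this
              linarith
          · -- t in step i, s in gap j
            rw [hgap j hj1m s ⟨hs1, hs2⟩]
            rcases le_or_gt i j with hij | hij
            · have e1 := (stepBounds i him t ht1 ht2).2
              have e3 : H (i+1) ≤ H (j+1) := hHmono (by omega) (by omega)
              linarith
            · have : t = s := by
                have := hamono (j+1) i hij him
                linarith
              subst this
              rw [← hgap j hj1m t ⟨hs1, hs2⟩]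
              linarith
        · rw [hgap i hi1m t ⟨ht1, ht2⟩]
          rcases hcj with ⟨hs1, hs2⟩ | ⟨hj1m, hs1, hs2⟩
          · -- t in gap i, s in step j
            rcases le_or_gt (i+1) j with hij | hij
            · have e2 := (stepBounds j hjm s hs1 hs2).1
              have e3 : H (i+1) ≤ H j := hHmono hij (by omega)
              linarith
            · have hji : j ≤ i := by omega
              have : t = s := by
                have := hbmono j i hji him
                linarith
              subst this
              rw [← hgap i hi1m t ⟨ht1, ht2⟩]
              linarith
          · -- both in gaps
            rw [hgap j hj1m s ⟨hs1, hs2⟩]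
            rcases le_or_gt i j with hij | hij
            · have e3 : H (i+1) ≤ H (j+1) := hHmono (by omega) (by omega)
              linarith
            · exfalso
              have h1 : b (j+1) ≤ b i := hbmono (j+1) i (by omega) him
              have h2 := hab (j+1) hj1m
              linarith
    intro t ht s hs hts
    have hpow : Filter.Tendsto (fun n => C s + r ^ n) Filter.atTop (nhds (C s)) := by
      have := (tendsto_pow_atTop_nhds_zero_of_lt_one hr0 hr1).const_add (C s)
      simpa using this
    exact ge_of_tendsto' hpow (fun n => key n t ht s hs hts)
  -- existence of a level containing any value
  have existsk : ∀ y', 0 ≤ y' → y' ≤ 1 → ∃ k < m, H k ≤ y' ∧ y' ≤ H (k+1) := by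
    have aux : ∀ n, 0 < n → ∀ y', 0 ≤ y' → y' ≤ H n →
        ∃ k < n, H k ≤ y' ∧ y' ≤ H (k+1) := by
      intro n
      induction n with
      | zero => omega
      | succ n ih =>
        intro _ y' hy0 hyn
        by_cases h : H n ≤ y'
        · exact ⟨n, Nat.lt_succ_self n, h, hyn⟩
        · have hn0 : 0 < n := by
            rcases Nat.eq_zero_or_pos n with h0 | h0
            · exfalso; apply h; rw [h0, hH0]; exact hy0
            · exact h0
          obtain ⟨k, hk, h1, h2⟩ := ih hn0 y' hy0 (le_of_not_ge h)
          exact ⟨k, by omega, h1, h2⟩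
    intro y' h0 h1
    exact aux m (by omega) y' h0 (hHm ▸ h1)
  -- surjectivity onto [0,1]
  have surj : ∀ y ∈ Set.Icc (0:ℝ) 1, ∃ t ∈ Set.Icc (0:ℝ) 1, C t = y := by
    intro y hy
    set Good : ℝ × ℝ × ℝ × ℝ → Prop := fun s =>
      s.1 < s.2.1 ∧ 0 ≤ s.1 ∧ s.2.1 ≤ 1 ∧ 0 < s.2.2.2 ∧
      s.2.2.1 ≤ y ∧ y ≤ s.2.2.1 + s.2.2.2 ∧
      ∀ x ∈ Set.Icc (0:ℝ) 1, C (s.1 + x * (s.2.1 - s.1)) = s.2.2.1 + s.2.2.2 * C x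
      with hGoodDef
    apply cantor_surj_aux C y r hr0 hr1 bound01 Good (fun s h => h)
    · -- initial state
      refine ⟨by norm_num, le_rfl, le_rfl, by norm_num, hy.1, by simpa using hy.2, ?_⟩
      intro x _
      norm_num
    · -- refinement step
      rintro ⟨lo, hi, p, q⟩ ⟨h1, h2, h3, h4, h5, h6, h7⟩
      simp only at h1 h2 h3 h4 h5 h6 h7 ⊢
      have hd : (0:ℝ) < hi - lo := by linarith
      set y' := (y - p) / q with hy'
      have hy'0 : 0 ≤ y' := div_nonneg (by linarith) h4.le
      have hy'1 : y' ≤ 1 := by rw [div_le_one h4]; linarith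
      have hqy : q * y' = y - p := by rw [hy', mul_div_cancel₀ _ h4.ne']
      obtain ⟨k, hk, hk1, hk2⟩ := existsk y' hy'0 hy'1
      have hak := hanonneg k hk
      have hbk := hble1 k hk
      have habk := hab k hk
      refine ⟨(lo + a k * (hi - lo), lo + b k * (hi - lo), p + q * H k, q * ρ k),
        ⟨?_, ?_, ?_, ?_, ?_, ?_, ?_⟩, ?_, ?_, ?_⟩
      · simp only; nlinarith
      · simp only; nlinarith
      · simp only; nlinarith
      · simp only; exact mul_pos h4 (hρpos k hk)
      · simp only
        have := mul_le_mul_of_nonneg_left hk1 h4.le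
        linarith [hqy ▸ this]
      · simp only
        have h8 : y' ≤ H k + ρ k := by rw [← hHsucc]; exact hk2
        have := mul_le_mul_of_nonneg_left h8 h4.le
        have h9 : q * y' ≤ q * (H k + ρ k) := this
        rw [hqy] at h9
        linarith [mul_add q (H k) (ρ k) ▸ h9]
      · simp only
        intro x hx
        set w := a k + x * (b k - a k) with hw
        have hw1 : a k ≤ w := by nlinarith [hx.1]
        have hw2 : w ≤ b k := by nlinarith [hx.2, hx.1]
        have hw01 : w ∈ Set.Icc (0:ℝ) 1 := ⟨le_trans hak hw1, le_trans hw2 hbk⟩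
        have e1 : lo + a k * (hi - lo) + x * (lo + b k * (hi - lo) - (lo + a k * (hi - lo)))
            = lo + w * (hi - lo) := by rw [hw]; ring
        rw [e1, h7 w hw01, hstep k hk w ⟨hw1, hw2⟩]
        have e2 : (w - a k) / (b k - a k) = x := by
          rw [hw]
          have : b k - a k ≠ 0 := by linarith
          field_simp
          ring
        rw [e2]
        ring
      · simp only; nlinarith
      · simp only; nlinarith
      · simp only
        have := mul_le_mul_of_nonneg_left (hrρ k hk) h4.le
        linarith [mul_comm q r ▸ this]
  -- continuity via a monotone surjective extension
  have cont : ContinuousOn C (Set.Icc 0 1) := by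
    set D : ℝ → ℝ := fun x => C (max 0 (min 1 x)) + min x 0 + max (x - 1) 0 with hD
    have hclamp : ∀ x : ℝ, max 0 (min 1 x) ∈ Set.Icc (0:ℝ) 1 :=
      fun x => ⟨le_max_left _ _, max_le zero_le_one (min_le_left _ _)⟩
    have monoD : Monotone D := by
      intro x z hxz
      have h1 : max 0 (min 1 x) ≤ max 0 (min 1 z) :=
        max_le_max le_rfl (min_le_min le_rfl hxz)
      have h2 : C (max 0 (min 1 x)) ≤ C (max 0 (min 1 z)) :=
        mono (hclamp x) (hclamp z) h1
      have h3 : min x 0 ≤ min z 0 := min_le_min hxz le_rfl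
      have h4 : max (x - 1) 0 ≤ max (z - 1) 0 := max_le_max (by linarith) le_rfl
      simp only [hD]
      linarith
    have surjD : Function.Surjective D := by
      intro y
      rcases le_or_gt y 0 with h | h
      · refine ⟨y, ?_⟩
        have e1 : min 1 y = y := min_eq_right (by linarith)
        have e2 : max (0:ℝ) y = 0 := max_eq_left h
        have e3 : min y 0 = y := min_eq_left h
        have e4 : max (y - 1) 0 = 0 := max_eq_right (by linarith)
        simp only [hD, e1, e2, e3, e4, hC0]
        ring
      · rcases le_or_gt y 1 with h1 | h1
        · obtain ⟨t, ht, hCt⟩ := surj y ⟨h.le, h1⟩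
          refine ⟨t, ?_⟩
          have e1 : min 1 t = t := min_eq_right ht.2
          have e2 : max 0 t = t := max_eq_right ht.1
          have e3 : min t 0 = 0 := min_eq_right ht.1
          have e4 : max (t - 1) 0 = 0 := max_eq_right (by linarith [ht.2])
          simp only [hD, e1, e2, e3, e4, hCt]
          ring
        · refine ⟨y, ?_⟩
          have e1 : min 1 y = 1 := min_eq_left h1.le
          have e2 : max (0:ℝ) 1 = 1 := max_eq_right zero_le_one
          have e3 : min y 0 = 0 := min_eq_right (by linarith)
          have e4 : max (y - 1) 0 = y - 1 := max_eq_left (by linarith)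
          simp only [hD, e1, e2, e3, e4, hC1]
          ring
    have contD : Continuous D := monoD.continuous_of_surjective surjD
    apply ContinuousOn.congr contD.continuousOn
    intro x hx
    have e1 : min 1 x = x := min_eq_right hx.2
    have e2 : max 0 x = x := max_eq_right hx.1
    have e3 : min x 0 = 0 := min_eq_right hx.1
    have e4 : max (x - 1) 0 = 0 := max_eq_right (by linarith [hx.2])
    simp only [hD, e1, e2, e3, e4]
    ring
  exact ⟨cont, mono, hC0, hC1⟩
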